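/- Consider the overdetermined least squares problem with design matrix A ∈ ℝ^{n×d}, n > d, rank(A) = d, right-hand side b ∈ ℝ^n, optimal solution x_opt, and optimal residual R² = min_x ‖Ax − b‖₂². Let S ∈ ℝ^{s×n} satisfy the structural conditions SC1: σ_min²(S U_A) ≥ 1/√2, and SC2: ‖U_Aᵀ Sᵀ S b⊥‖₂² ≤ ε R²/2, for some ε ∈ (0,1). Then the sketched solution x̃_opt = argmin_x ‖SAx − Sb‖₂² satisfies ‖A x̃_opt − b‖₂² ≤ (1 + ε) ‖A x_opt − b‖₂² and ‖x_opt − x̃_opt‖₂² ≤ ε ‖A x_opt − b‖₂² / σ_min²(A). -/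

import Mathlib

open scoped Classical
open Matrix

/-- The square of the smallest singular value of a matrix `A`, characterized as the
infimum of the Rayleigh quotients `‖Ay‖₂²/‖y‖₂²` over nonzero vectors `y`. -/
noncomputable def sigmaMinSq {n d : ℕ} (A : Matrix (Fin n) (Fin d) ℝ) : ℝ :=
  ⨅ y : {y : Fin d → ℝ // y ≠ 0}, (∑ i, (A.mulVec y.1 i) ^ 2) / ∑ j, (y.1 j) ^ 2

lemma mulVec_dot {m k : ℕ} (M : Matrix (Fin m) (Fin k) ℝ) (v : Fin k → ℝ) (w : Fin m → ℝ) :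
    M.mulVec v ⬝ᵥ w = v ⬝ᵥ Mᵀ.mulVec w := by
  simp only [dotProduct, mulVec, transpose_apply, Finset.sum_mul, Finset.mul_sum]
  rw [Finset.sum_comm]
  exact Finset.sum_congr rfl fun i _ => Finset.sum_congr rfl fun j _ => by ring

lemma sumsq_eq_dot {m : ℕ} (v : Fin m → ℝ) : ∑ i, (v i)^2 = v ⬝ᵥ v := by
  simp [dotProduct, pow_two]

lemma sumsq_sub {m : ℕ} (u w : Fin m → ℝ) :
    ∑ i, (u i - w i)^2 = ∑ i, (u i)^2 - 2*(u ⬝ᵥ w) + ∑ i, (w i)^2 := by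
  simp only [dotProduct, Finset.mul_sum, ← Finset.sum_sub_distrib, ← Finset.sum_add_distrib]
  exact Finset.sum_congr rfl fun i _ => by ring

lemma normal_eq {m k : ℕ} (M : Matrix (Fin m) (Fin k) ℝ) (c : Fin m → ℝ) (x0 : Fin k → ℝ)
    (h : ∀ x, ∑ i, (M.mulVec x0 i - c i)^2 ≤ ∑ i, (M.mulVec x i - c i)^2) :
    Mᵀ.mulVec (M.mulVec x0 - c) = 0 := by
  set r : Fin m → ℝ := M.mulVec x0 - c with hrdef
  have expand : ∀ (u w : Fin m → ℝ) (t : ℝ),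
      ∑ i, (u i + t * w i)^2
        = ∑ i, (u i)^2 + 2*t*(∑ i, w i * u i) + t^2 * ∑ i, (w i)^2 := by
    intro u w t
    rw [Finset.mul_sum, Finset.mul_sum, ← Finset.sum_add_distrib, ← Finset.sum_add_distrib]
    exact Finset.sum_congr rfl fun i _ => by ring
  have key : ∀ y : Fin k → ℝ, ∑ i, M.mulVec y i * r i = 0 := by
    intro y
    set cy := ∑ i, M.mulVec y i * r i with hcy
    set ky := ∑ i, (M.mulVec y i)^2 with hky
    have hkynn : 0 ≤ ky := Finset.sum_nonneg fun i _ => sq_nonneg _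
    have hq : ∀ t : ℝ, 0 ≤ 2*t*cy + t^2*ky := by
      intro t
      have hco : ∀ i, M.mulVec (x0 + t • y) i - c i = r i + t * M.mulVec y i := by
        intro i
        simp [Matrix.mulVec_add, Matrix.mulVec_smul, hrdef, Pi.sub_apply, smul_eq_mul]
        ring
      calc (0:ℝ) = ∑ i, (M.mulVec x0 i - c i)^2 - ∑ i, (r i)^2 := by
              rw [hrdef]; simp [Pi.sub_apply]
        _ ≤ ∑ i, (M.mulVec (x0 + t • y) i - c i)^2 - ∑ i, (r i)^2 := by
              linarith [h (x0 + t • y)]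
        _ = 2*t*cy + t^2*ky := by
              simp only [hco]; rw [expand r (M.mulVec y) t]; ring
    by_contra h0
    have hk1 : (0:ℝ) < ky + 1 := by linarith
    have ht := hq (-cy/(ky+1))
    have hval : 2*(-cy/(ky+1))*cy + (-cy/(ky+1))^2*ky = -(cy^2*(ky+2))/(ky+1)^2 := by
      field_simp; ring
    rw [hval] at ht
    have hcy2 : 0 < cy^2 := by positivity
    have hnum : 0 ≤ -(cy^2*(ky+2)) := by
      have := (div_nonneg_iff.mp ht)
      rcases this with ⟨h1, _⟩ | ⟨_, h2⟩
      · exact h1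
      · nlinarith
    nlinarith
  have h2 : ∑ j, (Mᵀ.mulVec r j)^2 = 0 := by
    have := key (Mᵀ.mulVec r)
    have hd : ∑ i, M.mulVec (Mᵀ.mulVec r) i * r i = Mᵀ.mulVec r ⬝ᵥ Mᵀ.mulVec r := by
      rw [show ∑ i, M.mulVec (Mᵀ.mulVec r) i * r i = M.mulVec (Mᵀ.mulVec r) ⬝ᵥ r from rfl,
        mulVec_dot]
    rw [hd] at this
    rw [show ∑ j, (Mᵀ.mulVec r j)^2 = Mᵀ.mulVec r ⬝ᵥ Mᵀ.mulVec r by simp [dotProduct, pow_two]]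
    exact this
  funext j
  have := (Finset.sum_eq_zero_iff_of_nonneg (fun i _ => sq_nonneg (Mᵀ.mulVec r i))).mp h2 j
    (Finset.mem_univ j)
  simpa using pow_eq_zero_iff (n := 2) (by norm_num) |>.mp this

lemma span_transfer {n d : ℕ} {A U : Matrix (Fin n) (Fin d) ℝ}
    (hspan : Submodule.span ℝ (Set.range Uᵀ) = Submodule.span ℝ (Set.range Aᵀ))
    (v : Fin n → ℝ) (h : Aᵀ.mulVec v = 0) : Uᵀ.mulVec v = 0 := by
  set K : Submodule ℝ (Fin n → ℝ) :=
    { carrier := {w | w ⬝ᵥ v = 0}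
      add_mem' := fun ha hb => by
        simp only [Set.mem_setOf_eq, add_dotProduct] at *
        rw [ha, hb, add_zero]
      zero_mem' := by simp [Set.mem_setOf_eq]
      smul_mem' := fun c a ha => by
        simp only [Set.mem_setOf_eq, smul_dotProduct] at *
        rw [ha, smul_zero] } with hK
  have hA : Set.range Aᵀ ⊆ K := by
    rintro _ ⟨j, rfl⟩
    show Aᵀ j ⬝ᵥ v = 0
    have := congrFun h j
    simpa [mulVec, dotProduct] using this
  have hUle : Submodule.span ℝ (Set.range Uᵀ) ≤ K := by
    rw [hspan]; exact Submodule.span_le.mpr hA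
  funext j
  have hj : Uᵀ j ⬝ᵥ v = 0 := hUle (Submodule.subset_span ⟨j, rfl⟩)
  simpa [mulVec, dotProduct] using hj

lemma col_transfer {n d : ℕ} {A U : Matrix (Fin n) (Fin d) ℝ}
    (hspan : Submodule.span ℝ (Set.range Uᵀ) = Submodule.span ℝ (Set.range Aᵀ))
    (x : Fin d → ℝ) : ∃ c, A.mulVec x = U.mulVec c := by
  have hrep : ∀ (M : Matrix (Fin n) (Fin d) ℝ) (y : Fin d → ℝ),
      M.mulVec y = ∑ j, y j • Mᵀ j := by
    intro M y
    funext i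
    simp [mulVec, dotProduct, Finset.sum_apply, mul_comm]
  have h1 : A.mulVec x ∈ Submodule.span ℝ (Set.range Aᵀ) := by
    rw [hrep]
    exact Submodule.sum_mem _ fun j _ =>
      Submodule.smul_mem _ _ (Submodule.subset_span ⟨j, rfl⟩)
  rw [← hspan] at h1
  obtain ⟨c, hc⟩ := (Submodule.mem_span_range_iff_exists_fun ℝ (v := fun j => Uᵀ j)).mp h1
  exact ⟨c, by rw [← hc, ← hrep]⟩

lemma sumsq_pos {m : ℕ} {y : Fin m → ℝ} (hy : y ≠ 0) : 0 < ∑ j, (y j)^2 := by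
  obtain ⟨j, hj⟩ := Function.ne_iff.mp hy
  exact Finset.sum_pos' (fun i _ => sq_nonneg _)
    ⟨j, Finset.mem_univ j, sq_pos_of_ne_zero hj⟩

lemma sigmaMinSq_nonneg {n d : ℕ} (A : Matrix (Fin n) (Fin d) ℝ) : 0 ≤ sigmaMinSq A :=
  Real.iInf_nonneg fun y => by positivity

lemma sigmaMinSq_le {n d : ℕ} (A : Matrix (Fin n) (Fin d) ℝ) (y : Fin d → ℝ) (hy : y ≠ 0) :
    sigmaMinSq A * ∑ j, (y j)^2 ≤ ∑ i, (A.mulVec y i)^2 := by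
  have hb : BddBelow (Set.range fun y : {y : Fin d → ℝ // y ≠ 0} =>
      (∑ i, (A.mulVec y.1 i)^2) / ∑ j, (y.1 j)^2) := by
    refine ⟨0, ?_⟩; rintro _ ⟨z, rfl⟩; positivity
  have h1 : sigmaMinSq A ≤ (∑ i, (A.mulVec y i)^2) / ∑ j, (y j)^2 := ciInf_le hb ⟨y, hy⟩
  exact (le_div_iff₀ (sumsq_pos hy)).mp h1

lemma sumsq_eq_norm {m : ℕ} (v : EuclideanSpace ℝ (Fin m)) : ∑ i, (v i)^2 = ‖v‖^2 := by
  rw [EuclideanSpace.norm_eq, Real.sq_sqrt (by positivity)]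
  simp [Real.norm_eq_abs, sq_abs]

lemma sigmaMinSq_pos {n d : ℕ} (A : Matrix (Fin n) (Fin d) ℝ) (hd : 0 < d)
    (hrank : A.rank = d) : 0 < sigmaMinSq A := by
  have hinj : Function.Injective A.mulVecLin := by
    rw [← LinearMap.ker_eq_bot]
    have hrn := A.mulVecLin.finrank_range_add_finrank_ker
    have hdom : Module.finrank ℝ (Fin d → ℝ) = d := by simp
    rw [hdom] at hrn
    rw [Matrix.rank] at hrank
    have : Module.finrank ℝ (LinearMap.ker A.mulVecLin) = 0 := by omega
    exact Submodule.finrank_eq_zero.mp this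
  let f : EuclideanSpace ℝ (Fin d) →ₗ[ℝ] EuclideanSpace ℝ (Fin n) :=
    { toFun := fun y => WithLp.toLp 2 (A.mulVec y)
      map_add' := fun x y => congrArg (WithLp.toLp 2) (A.mulVec_add x y)
      map_smul' := fun c y => congrArg (WithLp.toLp 2) (A.mulVec_smul c y) }
  have hfinj : Function.Injective f := by
    intro x y hxy
    have h' : A.mulVecLin x.ofLp = A.mulVecLin y.ofLp := congrArg WithLp.ofLp hxy
    exact congrArg (WithLp.toLp 2) (hinj h')
  let e := LinearEquiv.ofInjective f hfinj
  let ec := e.toContinuousLinearEquiv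
  set K : ℝ := ‖(ec.symm : LinearMap.range f →L[ℝ] EuclideanSpace ℝ (Fin d))‖ with hK
  have hKnn : 0 ≤ K := by rw [hK]; positivity
  have hanti : ∀ x : EuclideanSpace ℝ (Fin d), ‖x‖ ≤ K * ‖f x‖ := by
    intro x
    have h := ec.antilipschitz.le_mul_dist x 0
    rw [dist_eq_norm, dist_eq_norm, sub_zero, map_zero, sub_zero, coe_nnnorm] at h
    exact h
  have hbound : ∀ y : Fin d → ℝ, y ≠ 0 →
      (1 : ℝ)/(K^2+1) ≤ (∑ i, (A.mulVec y i)^2) / ∑ j, (y j)^2 := by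
    intro y hy
    rw [le_div_iff₀ (sumsq_pos hy)]
    set y' : EuclideanSpace ℝ (Fin d) := (WithLp.equiv 2 (Fin d → ℝ)).symm y with hy'
    have hx : ‖y'‖ ≤ K * ‖f y'‖ := hanti y'
    have h1 : ‖y'‖^2 ≤ (K^2+1) * ‖f y'‖^2 := by
      nlinarith [norm_nonneg (f y'), norm_nonneg y']
    have hsy : ∑ j, (y j)^2 = ‖y'‖^2 := sumsq_eq_norm y'
    have hsA : ∑ i, (A.mulVec y i)^2 = ‖f y'‖^2 := sumsq_eq_norm (f y')
    have hk1 : (0:ℝ) < K^2+1 := by positivity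
    rw [hsy, hsA, div_mul_eq_mul_div, one_mul, div_le_iff₀ hk1]
    nlinarith [h1]
  haveI : Nonempty {y : Fin d → ℝ // y ≠ 0} := ⟨⟨fun _ => 1, by
    intro h; have := congrFun h ⟨0, hd⟩; simpa using this⟩⟩
  have : (1:ℝ)/(K^2+1) ≤ sigmaMinSq A := le_ciInf fun y => hbound y.1 y.2
  have hk1 : (0:ℝ) < K^2+1 := by positivity
  calc (0:ℝ) < 1/(K^2+1) := by positivity
    _ ≤ _ := this

/-- Deterministic guarantees for a sketched overdetermined least
squares problem under the two structural conditions.  Here `U` is an orthonormal basis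
of the column space of `A` (from the thin SVD), `b⊥ = b − U Uᵀ b` is the projection of
`b` onto the orthogonal complement of the column space of `A`, `x_opt` is a minimizer
of `‖Ax − b‖₂²` (with optimal residual `R² = ‖A x_opt − b‖₂²`), and `x̃_opt` is a
minimizer of the sketched problem `‖SAx − Sb‖₂²`.  If SC1: `σ_min²(SU) ≥ 1/√2` and
SC2: `‖Uᵀ Sᵀ S b⊥‖₂² ≤ ε R²/2`, then
`‖A x̃_opt − b‖₂² ≤ (1+ε) R²` and `‖x_opt − x̃_opt‖₂² ≤ ε R² / σ_min²(A)`. -/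
theorem statement12 (n d s : ℕ) (hnd : d < n)
    (A : Matrix (Fin n) (Fin d) ℝ) (hrank : A.rank = d)
    (U : Matrix (Fin n) (Fin d) ℝ) (hU : Uᵀ * U = 1)
    (hspan : Submodule.span ℝ (Set.range Uᵀ) = Submodule.span ℝ (Set.range Aᵀ))
    (b : Fin n → ℝ) (S : Matrix (Fin s) (Fin n) ℝ)
    (ε : ℝ) (hε : ε ∈ Set.Ioo (0 : ℝ) 1)
    (xopt : Fin d → ℝ)
    (hxopt : ∀ x, ∑ i, (A.mulVec xopt i - b i) ^ 2 ≤ ∑ i, (A.mulVec x i - b i) ^ 2)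
    (sc1 : 1 / Real.sqrt 2 ≤ sigmaMinSq (S * U))
    (sc2 : ∑ k, ((Uᵀ * Sᵀ * S).mulVec (b - U.mulVec (Uᵀ.mulVec b)) k) ^ 2
        ≤ ε * (∑ i, (A.mulVec xopt i - b i) ^ 2) / 2)
    (xt : Fin d → ℝ)
    (hxt : ∀ x, ∑ j, ((S * A).mulVec xt j - S.mulVec b j) ^ 2 ≤
        ∑ j, ((S * A).mulVec x j - S.mulVec b j) ^ 2) :
    (∑ i, (A.mulVec xt i - b i) ^ 2 ≤ (1 + ε) * ∑ i, (A.mulVec xopt i - b i) ^ 2) ∧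
    (∑ k, (xopt k - xt k) ^ 2 ≤
        ε * (∑ i, (A.mulVec xopt i - b i) ^ 2) / sigmaMinSq A) := by
  obtain ⟨hε0, hε1⟩ := hε
  rcases Nat.eq_zero_or_pos d with hd0 | hd
  · exfalso
    subst hd0
    haveI : IsEmpty {y : Fin 0 → ℝ // y ≠ 0} :=
      ⟨fun y => y.2 (Subsingleton.elim _ _)⟩
    have h0 : sigmaMinSq (S * U) = 0 := Real.iInf_of_isEmpty _
    rw [h0] at sc1
    have : (0:ℝ) < 1 / Real.sqrt 2 := by positivity
    linarith
  -- main case d ≥ 1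
  have hR2nn : (0:ℝ) ≤ ∑ i, (A.mulVec xopt i - b i) ^ 2 :=
    Finset.sum_nonneg fun i _ => sq_nonneg _
  have hUU : ∀ v : Fin d → ℝ, Uᵀ.mulVec (U.mulVec v) = v := fun v => by
    rw [Matrix.mulVec_mulVec, hU, Matrix.one_mulVec]
  -- normal equations for the original problem
  have n1 : Aᵀ.mulVec (A.mulVec xopt - b) = 0 := normal_eq A b xopt hxopt
  have n1' : Uᵀ.mulVec (A.mulVec xopt - b) = 0 := span_transfer hspan _ n1
  obtain ⟨c, hc⟩ := col_transfer hspan xopt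
  have hcval : c = Uᵀ.mulVec b := by
    have h1 : Uᵀ.mulVec (A.mulVec xopt) - Uᵀ.mulVec b = 0 := by
      rw [← Matrix.mulVec_sub]; exact n1'
    rw [hc, hUU] at h1
    exact sub_eq_zero.mp h1
  have hAxopt : A.mulVec xopt = U.mulVec (Uᵀ.mulVec b) := by rw [hc, hcval]
  set bp : Fin n → ℝ := b - U.mulVec (Uᵀ.mulVec b) with hbp
  have hrbp : A.mulVec xopt - b = -bp := by rw [hbp, hAxopt]; abel
  have hUbp : Uᵀ.mulVec bp = 0 := by
    rw [hbp, Matrix.mulVec_sub, hUU, sub_self]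
  have hbpR2 : ∑ i, (bp i)^2 = ∑ i, (A.mulVec xopt i - b i) ^ 2 := by
    apply Finset.sum_congr rfl
    intro i _
    have : A.mulVec xopt i - b i = -bp i := congrFun hrbp i
    rw [this]; ring
  -- normal equations for the sketched problem
  have n2 : (S * A)ᵀ.mulVec ((S * A).mulVec xt - S.mulVec b) = 0 :=
    normal_eq (S * A) (S.mulVec b) xt hxt
  have n2' : Aᵀ.mulVec (Sᵀ.mulVec (S.mulVec (A.mulVec xt - b))) = 0 := by
    have heqn : (S * A)ᵀ.mulVec ((S * A).mulVec xt - S.mulVec b)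
        = Aᵀ.mulVec (Sᵀ.mulVec (S.mulVec (A.mulVec xt - b))) := by
      simp only [Matrix.transpose_mul, Matrix.mulVec_sub, ← Matrix.mulVec_mulVec]
    rw [← heqn]; exact n2
  have n2'' : Uᵀ.mulVec (Sᵀ.mulVec (S.mulVec (A.mulVec xt - b))) = 0 :=
    span_transfer hspan _ n2'
  obtain ⟨c2, hc2⟩ := col_transfer hspan xt
  have hc2val : U.mulVec (Uᵀ.mulVec (A.mulVec xt)) = A.mulVec xt := by
    rw [hc2, hUU]
  set z : Fin d → ℝ := Uᵀ.mulVec (A.mulVec xt) - Uᵀ.mulVec b with hz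
  have hdecomp : A.mulVec xt - b = U.mulVec z - bp := by
    rw [hz, hbp, Matrix.mulVec_sub, hc2val]; abel
  set g : Fin d → ℝ := Uᵀ.mulVec (Sᵀ.mulVec (S.mulVec bp)) with hg
  have heq : Uᵀ.mulVec (Sᵀ.mulVec (S.mulVec (U.mulVec z))) = g := by
    have h3 := n2''
    rw [hdecomp, Matrix.mulVec_sub, Matrix.mulVec_sub, Matrix.mulVec_sub] at h3
    rw [hg]
    exact sub_eq_zero.mp h3
  have hg2 : ∑ k, (g k)^2 ≤ ε * (∑ i, (A.mulVec xopt i - b i) ^ 2) / 2 := by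
    have hgeq : (Uᵀ * Sᵀ * S).mulVec bp = g := by
      rw [hg, ← Matrix.mulVec_mulVec, ← Matrix.mulVec_mulVec]
    calc ∑ k, (g k)^2 = ∑ k, ((Uᵀ * Sᵀ * S).mulVec bp k)^2 := by rw [hgeq]
      _ ≤ _ := sc2
  -- key bound on z
  have hzbound : ∑ j, (z j)^2 ≤ ε * ∑ i, (A.mulVec xopt i - b i) ^ 2 := by
    rcases eq_or_ne z 0 with hz0 | hz0
    · rw [hz0]
      simpa using mul_nonneg hε0.le hR2nn
    · have hs := sigmaMinSq_le (S * U) z hz0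
      have hz2nn : (0:ℝ) ≤ ∑ j, (z j)^2 := Finset.sum_nonneg fun j _ => sq_nonneg _
      have hsc1 : (1/Real.sqrt 2) * ∑ j, (z j)^2 ≤ ∑ i, ((S*U).mulVec z i)^2 :=
        le_trans (mul_le_mul_of_nonneg_right sc1 hz2nn) hs
      have hdot : ∑ i, ((S*U).mulVec z i)^2 = z ⬝ᵥ g := by
        rw [sumsq_eq_dot, mulVec_dot, ← heq]
        congr 1
        rw [Matrix.transpose_mul, ← Matrix.mulVec_mulVec, ← Matrix.mulVec_mulVec]
      have hcs : (z ⬝ᵥ g)^2 ≤ (∑ j, (z j)^2) * (∑ k, (g k)^2) := by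
        simpa [dotProduct] using Finset.sum_mul_sq_le_sq_mul_sq Finset.univ z g
      have hzpos : 0 < ∑ j, (z j)^2 := sumsq_pos hz0
      have hsqrt2 : Real.sqrt 2 ^ 2 = 2 := Real.sq_sqrt (by norm_num)
      have hsqrt2pos : 0 < Real.sqrt 2 := by positivity
      rw [hdot] at hsc1
      have hq : ((1/Real.sqrt 2) * ∑ j, (z j)^2)^2 ≤ (z ⬝ᵥ g)^2 := by
        apply pow_le_pow_left₀ (by positivity) hsc1
      have e1 : ((1/Real.sqrt 2) * ∑ j, (z j)^2)^2 = (∑ j, (z j)^2)^2/2 := by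
        rw [mul_pow, div_pow, one_pow, hsqrt2]; ring
      rw [e1] at hq
      have h5 : (∑ j, (z j)^2)^2/2 ≤ (∑ j, (z j)^2) * (∑ k, (g k)^2) := le_trans hq hcs
      have h6 : (∑ j, (z j)^2)/2 ≤ ∑ k, (g k)^2 := by nlinarith [hzpos]
      linarith [hg2, h6]
  -- claim 1
  have hnormU : ∀ v : Fin d → ℝ, ∑ i, (U.mulVec v i)^2 = ∑ j, (v j)^2 := by
    intro v
    rw [sumsq_eq_dot, mulVec_dot, hUU, ← sumsq_eq_dot]
  have claim1 : ∑ i, (A.mulVec xt i - b i) ^ 2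
      ≤ (1 + ε) * ∑ i, (A.mulVec xopt i - b i) ^ 2 := by
    have hexp : ∑ i, (A.mulVec xt i - b i) ^ 2
        = ∑ j, (z j)^2 + ∑ i, (A.mulVec xopt i - b i) ^ 2 := by
      have h1 : ∀ i, A.mulVec xt i - b i = U.mulVec z i - bp i := fun i =>
        congrFun hdecomp i
      calc ∑ i, (A.mulVec xt i - b i) ^ 2
          = ∑ i, (U.mulVec z i - bp i)^2 := by
            exact Finset.sum_congr rfl fun i _ => by rw [h1 i]
        _ = ∑ i, (U.mulVec z i)^2 - 2*(U.mulVec z ⬝ᵥ bp) + ∑ i, (bp i)^2 :=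
            sumsq_sub _ _
        _ = ∑ j, (z j)^2 + ∑ i, (A.mulVec xopt i - b i) ^ 2 := by
            rw [hnormU, hbpR2, mulVec_dot, hUbp, dotProduct_zero]; ring
    rw [hexp]
    nlinarith [hzbound, hR2nn]
  refine ⟨claim1, ?_⟩
  -- claim 2
  have hσpos : 0 < sigmaMinSq A := sigmaMinSq_pos A hd hrank
  have hAv : A.mulVec (xopt - xt) = U.mulVec (-z) := by
    rw [Matrix.mulVec_sub, hAxopt, hz, neg_sub, Matrix.mulVec_sub, hc2val]
  have h2 : ∑ i, (A.mulVec (xopt - xt) i)^2 = ∑ j, (z j)^2 := by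
    rw [hAv, hnormU]
    exact Finset.sum_congr rfl fun j _ => by simp
  have hfinal : sigmaMinSq A * ∑ k, (xopt k - xt k)^2
      ≤ ε * ∑ i, (A.mulVec xopt i - b i) ^ 2 := by
    rcases eq_or_ne (xopt - xt) 0 with h0 | h0
    · have hk : ∀ k, xopt k - xt k = 0 := fun k => congrFun h0 k
      calc sigmaMinSq A * ∑ k, (xopt k - xt k)^2 = 0 := by
            simp [hk]
        _ ≤ _ := mul_nonneg hε0.le hR2nn
    · have hle := sigmaMinSq_le A _ h0
      have : ∑ j, ((xopt - xt) j)^2 = ∑ k, (xopt k - xt k)^2 := rfl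
      rw [this] at hle
      calc sigmaMinSq A * ∑ k, (xopt k - xt k)^2
          ≤ ∑ i, (A.mulVec (xopt - xt) i)^2 := hle
        _ = ∑ j, (z j)^2 := h2
        _ ≤ _ := hzbound
  rw [le_div_iff₀ hσpos]
  linarith [hfinal]
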